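/- arXiv:2301.03371 — 6 statements merged into one kernel-verified Lean document; each statement's English description precedes it below -/
import Mathlib

section
/- Let p > 0 and a ≥ 0 be real numbers. Then for every real t with |t| ≤ 1/4, exp(−t(p + a)) · exp(a·t/(1 − 2t)) / (1 − 2t)^{p/2} ≤ exp(2(p + 2a)·t²). Consequently, any random variable X whose moment generating function equals E[exp(tX)] = exp(a·t/(1 − 2t))/(1 − 2t)^{p/2} for t < 1/2 (i.e. a non-central chi-squared random variable with p degrees of freedom and non-centrality parameter a, which has mean p + a) satisfies E[exp(t(X − (p + a)))] ≤ exp(2(p + 2a)t²) for all |t| ≤ 1/4. -/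
open MeasureTheory Real

private lemma log_key : ∀ t : ℝ, |t| ≤ 1 / 4 → -2*t - 4*t^2 ≤ Real.log (1 - 2*t) := by
  have hf : ∀ t : ℝ, t ∈ Set.Ioo (-(1/3) : ℝ) (1/3) →
      HasDerivAt (fun t : ℝ => Real.log (1 - 2*t) + 2*t + 4*t^2)
        (-2/(1-2*t) + (2 + 8*t)) t := by
    intro t ht
    have hne : (1 - 2*t) ≠ 0 := by
      obtain ⟨h1, h2⟩ := ht; nlinarith
    have h1 : HasDerivAt (fun t : ℝ => 1 - 2*t) (-2) t := by
      simpa using ((hasDerivAt_id t).const_mul (2:ℝ)).const_sub 1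
    have h2 : HasDerivAt (fun t : ℝ => Real.log (1 - 2*t)) (-2/(1-2*t)) t := by
      simpa [div_eq_mul_inv, mul_comm] using h1.log hne
    have h3 : HasDerivAt (fun t : ℝ => 2*t + 4*t^2) (2 + 8*t) t := by
      have := ((hasDerivAt_id t).const_mul (2:ℝ)).add
        (((hasDerivAt_pow 2 t)).const_mul (4:ℝ))
      exact this.congr_deriv (by norm_num; ring)
    have := h2.add h3
    exact this.congr_of_eventuallyEq (Filter.Eventually.of_forall fun x => by simp only [Pi.add_apply]; ring)
  set f : ℝ → ℝ := fun t : ℝ => Real.log (1 - 2*t) + 2*t + 4*t^2 with hfdef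
  have hcont : ContinuousOn f (Set.Icc (-(1/4) : ℝ) (1/4)) := by
    apply ContinuousOn.add
    apply ContinuousOn.add
    · apply ContinuousOn.log
      · fun_prop
      · intro x hx; obtain ⟨h1, h2⟩ := hx; nlinarith
    · fun_prop
    · fun_prop
  have hmono : MonotoneOn f (Set.Icc (0 : ℝ) (1/4)) := by
    apply monotoneOn_of_deriv_nonneg (convex_Icc _ _)
      (hcont.mono (by intro x hx; obtain ⟨h1,h2⟩ := hx; constructor <;> linarith))
    · intro x hx
      rw [interior_Icc] at hx
      exact ((hf x ⟨by linarith [hx.1], by linarith [hx.2]⟩).differentiableAt).differentiableWithinAt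
    · intro x hx
      rw [interior_Icc] at hx
      rw [((hf x ⟨by linarith [hx.1], by linarith [hx.2]⟩)).deriv]
      have h12 : 0 < 1 - 2*x := by nlinarith [hx.2]
      rw [div_add' _ _ _ h12.ne']
      apply div_nonneg _ h12.le
      nlinarith [hx.1, hx.2]
  have hanti : AntitoneOn f (Set.Icc (-(1/4) : ℝ) 0) := by
    apply antitoneOn_of_deriv_nonpos (convex_Icc _ _)
      (hcont.mono (by intro x hx; obtain ⟨h1,h2⟩ := hx; constructor <;> linarith))
    · intro x hx
      rw [interior_Icc] at hx
      exact ((hf x ⟨by linarith [hx.1], by linarith [hx.2]⟩).differentiableAt).differentiableWithinAt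
    · intro x hx
      rw [interior_Icc] at hx
      rw [((hf x ⟨by linarith [hx.1], by linarith [hx.2]⟩)).deriv]
      have h12 : 0 < 1 - 2*x := by nlinarith [hx.2]
      rw [div_add' _ _ _ h12.ne']
      apply div_nonpos_of_nonpos_of_nonneg _ h12.le
      nlinarith [hx.1, hx.2]
  have hf0 : f 0 = 0 := by simp [hfdef]
  intro t ht
  rw [abs_le] at ht
  have : 0 ≤ f t := by
    rcases le_or_gt 0 t with h | h
    · have := hmono ⟨le_rfl, by norm_num⟩ ⟨h, ht.2⟩ h
      rwa [hf0] at this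
    · have := hanti ⟨ht.1, h.le⟩ ⟨by linarith [ht.1], le_rfl⟩ h.le
      rwa [hf0] at this
  simp only [hfdef] at this
  linarith

/-- the paper's Lemma 3. For `p > 0`, `a ≥ 0` and `|t| ≤ 1/4`,
`exp(−t(p+a)) exp(a t/(1−2t))/(1−2t)^{p/2} ≤ exp(2(p+2a)t²)`. Consequently, a random
variable `X` whose MGF is `exp(a t/(1−2t))/(1−2t)^{p/2}` for `t < 1/2` (a non-central
chi-squared with `p` degrees of freedom and non-centrality `a`, with mean `p + a`)
satisfies `E[exp(t(X − (p+a)))] ≤ exp(2(p+2a)t²)` for all `|t| ≤ 1/4`. -/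
theorem noncentral_chisq_subexponential {Ω : Type*} [MeasurableSpace Ω]
    (μ : Measure Ω) [IsProbabilityMeasure μ] (p a : ℝ) (hp : 0 < p) (ha : 0 ≤ a)
    (X : Ω → ℝ)
    (hMGF : ∀ t : ℝ, t < 1 / 2 →
      ∫ ω, Real.exp (t * X ω) ∂μ
        = Real.exp (a * t / (1 - 2 * t)) / (1 - 2 * t) ^ (p / 2)) :
    (∀ t : ℝ, |t| ≤ 1 / 4 →
      Real.exp (-t * (p + a)) * Real.exp (a * t / (1 - 2 * t)) / (1 - 2 * t) ^ (p / 2)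
        ≤ Real.exp (2 * (p + 2 * a) * t ^ 2)) ∧
    (∀ t : ℝ, |t| ≤ 1 / 4 →
      ∫ ω, Real.exp (t * (X ω - (p + a))) ∂μ ≤ Real.exp (2 * (p + 2 * a) * t ^ 2)) := by
  have key : ∀ t : ℝ, |t| ≤ 1 / 4 →
      Real.exp (-t * (p + a)) * Real.exp (a * t / (1 - 2 * t)) / (1 - 2 * t) ^ (p / 2)
        ≤ Real.exp (2 * (p + 2 * a) * t ^ 2) := by
    intro t ht
    have ht' := abs_le.mp ht
    have h12 : (1:ℝ)/2 ≤ 1 - 2*t := by linarith [ht'.2]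
    have h12pos : (0:ℝ) < 1 - 2*t := by linarith
    have hrpow : ((1 - 2*t : ℝ) ^ (p/2) : ℝ) = Real.exp ((p/2) * Real.log (1 - 2*t)) := by
      rw [← Real.log_rpow h12pos, Real.exp_log (Real.rpow_pos_of_pos h12pos _)]
    rw [hrpow, ← Real.exp_add, ← Real.exp_sub, Real.exp_le_exp]
    -- need: -t(p+a) + at/(1-2t) - (p/2) log(1-2t) ≤ 2(p+2a)t²
    have hlog := log_key t ht
    -- a-term: at/(1-2t) - at = 2at²/(1-2t) ≤ 4at²
    have haterm : a * t / (1 - 2*t) ≤ a*t + 4*a*t^2 := by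
      rw [div_le_iff₀ h12pos]
      nlinarith [sq_nonneg t, mul_nonneg ha (sq_nonneg t)]
    -- p-term: -(p/2) log(1-2t) ≤ (p/2)(2t + 4t²) = pt + 2pt²
    have hpterm : -(p/2) * Real.log (1 - 2*t) ≤ p*t + 2*p*t^2 := by
      nlinarith [hlog, hp.le]
    nlinarith [haterm, hpterm]
  refine ⟨key, fun t ht => ?_⟩
  have ht' := abs_le.mp ht
  have hlt : t < 1/2 := by linarith [ht'.2]
  have hint : ∫ ω, Real.exp (t * (X ω - (p + a))) ∂μ
      = Real.exp (-t * (p+a)) * ∫ ω, Real.exp (t * X ω) ∂μ := by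
    rw [← integral_const_mul]
    congr 1; ext ω
    rw [← Real.exp_add]; ring_nf
  rw [hint, hMGF t hlt, mul_div_assoc']
  exact key t ht
end

section
/- Let p ≥ 0 be a real number. Then for every real t with |t| ≤ 1/4, exp(−p·t) ≤ (1 − 2t)^{p/2} · exp(2p·t²); equivalently, exp(−p·t)/(1 − 2t)^{p/2} ≤ exp(2p·t²). -/
open Real

lemma log_one_sub_ge (u : ℝ) (hu : |u| ≤ 1 / 2) : -u - u ^ 2 ≤ Real.log (1 - u) := by
  rw [abs_le] at hu
  have h1 : (0:ℝ) < 1 - u := by linarith [hu.2]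
  rw [Real.le_log_iff_exp_le h1]
  rcases le_or_gt u 0 with h | h
  · have hpos : (0:ℝ) < 1 + (u + u ^ 2) := by nlinarith
    have := Real.add_one_le_exp (u + u ^ 2)
    have hexp : Real.exp (-u - u ^ 2) = (Real.exp (u + u ^ 2))⁻¹ := by
      rw [← Real.exp_neg]; ring_nf
    rw [hexp]
    have h2 : (Real.exp (u + u ^ 2))⁻¹ ≤ (1 + (u + u ^ 2))⁻¹ := by
      apply inv_anti₀ hpos; linarith
    refine h2.trans ?_
    rw [inv_le_iff_one_le_mul₀ hpos]
    nlinarith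
  · have hq := Real.quadratic_le_exp_of_nonneg (by nlinarith : (0:ℝ) ≤ u + u ^ 2)
    have hexp : Real.exp (-u - u ^ 2) = (Real.exp (u + u ^ 2))⁻¹ := by
      rw [← Real.exp_neg]; ring_nf
    rw [hexp]
    have hpos : (0:ℝ) < 1 + (u + u ^ 2) + (u + u ^ 2) ^ 2 / 2 := by nlinarith
    have h2 : (Real.exp (u + u ^ 2))⁻¹ ≤ (1 + (u + u ^ 2) + (u + u ^ 2) ^ 2 / 2)⁻¹ :=
      inv_anti₀ hpos hq
    refine h2.trans ?_
    rw [inv_le_iff_one_le_mul₀ hpos]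
    nlinarith [hu.2, h.le, sq_nonneg u, sq_nonneg (1 - 2*u)]

/-- inequality (MGF2) in the proof of the paper's Lemma 3. For
`p ≥ 0` and `|t| ≤ 1/4`, `exp(−p t) ≤ (1 − 2t)^{p/2} exp(2 p t²)`; equivalently
`exp(−p t)/(1 − 2t)^{p/2} ≤ exp(2 p t²)`. -/
theorem central_chisq_mgf_bound (p : ℝ) (hp : 0 ≤ p) :
    ∀ t : ℝ, |t| ≤ 1 / 4 →
      Real.exp (-p * t) ≤ (1 - 2 * t) ^ (p / 2) * Real.exp (2 * p * t ^ 2) ∧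
      Real.exp (-p * t) / (1 - 2 * t) ^ (p / 2) ≤ Real.exp (2 * p * t ^ 2) := by
  intro t ht
  have ht' : |2 * t| ≤ 1 / 2 := by rw [abs_mul, abs_two]; linarith [abs_le.1 ht |>.1, abs_le.1 ht |>.2]; 
  have hpos : (0:ℝ) < 1 - 2 * t := by
    have := (abs_le.1 ht).2; linarith
  have hlog := log_one_sub_ge (2 * t) ht'
  have hkey : -p * t ≤ p / 2 * Real.log (1 - 2 * t) + 2 * p * t ^ 2 := by
    have := mul_le_mul_of_nonneg_left hlog (by positivity : (0:ℝ) ≤ p / 2)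
    nlinarith
  have hrpow : (1 - 2 * t) ^ (p / 2) = Real.exp (Real.log (1 - 2 * t) * (p / 2)) :=
    Real.rpow_def_of_pos hpos _
  have hmain : Real.exp (-p * t) ≤ (1 - 2 * t) ^ (p / 2) * Real.exp (2 * p * t ^ 2) := by
    rw [hrpow, ← Real.exp_add]
    apply Real.exp_le_exp.2
    linarith [hkey]
  refine ⟨hmain, ?_⟩
  rw [div_le_iff₀ (Real.rpow_pos_of_pos hpos _)]
  calc Real.exp (-p * t) ≤ (1 - 2 * t) ^ (p / 2) * Real.exp (2 * p * t ^ 2) := hmain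
    _ = Real.exp (2 * p * t ^ 2) * (1 - 2 * t) ^ (p / 2) := mul_comm _ _
end

section
/- Define sinc(x) = sin(x)/x for x ≠ 0 and sinc(0) = 1, let H(β1, β2) = C·sinc(K_x·π·(α1 − β1))·sinc(K_y·π·(α2 − β2)) with C a nonzero complex constant, K_x, K_y > 0, α1, α2 real, and let μ(β1, β2) = P·|H(β1, β2)|² + σ² with P > 0 and σ² > 0. Let β1⁰, β2⁰, v be reals such that K_x·v is a positive integer, α1 − β1⁰ ≠ 0, α1 − β1⁰ − v ≠ 0, sin(K_x·π·(α1 − β1⁰)) ≠ 0, and sinc(K_y·π·(α2 − β2⁰)) ≠ 0. Then (μ(β1⁰, β2⁰) − σ²) / (μ(β1⁰ + v, β2⁰) − σ²) = ((α1 − β1⁰ − v)/(α1 − β1⁰))². -/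
open Real

/-- `sinc x = sin x / x` for `x ≠ 0` and `sinc 0 = 1`. -/
noncomputable def sinc (x : ℝ) : ℝ := if x = 0 then 1 else Real.sin x / x

/-- Eq. (14) in the proof of the paper's Theorem 1. With
`H(β1,β2) = C·sinc(Kₓπ(α1−β1))·sinc(K_yπ(α2−β2))` (`C ≠ 0`, `Kₓ, K_y > 0`) and
`μ(β1,β2) = P|H(β1,β2)|² + σ²` (`P > 0`, `σ² > 0`), if `Kₓ·v` is a positive integer,
`α1 − β1⁰ ≠ 0`, `α1 − β1⁰ − v ≠ 0`, `sin(Kₓπ(α1 − β1⁰)) ≠ 0` and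
`sinc(K_yπ(α2 − β2⁰)) ≠ 0`, then
`(μ(β1⁰,β2⁰) − σ²)/(μ(β1⁰+v,β2⁰) − σ²) = ((α1 − β1⁰ − v)/(α1 − β1⁰))²`. -/
theorem ratio_identity (C : ℂ) (hC : C ≠ 0) (Kx Ky α1 α2 P σ2 : ℝ)
    (hKx : 0 < Kx) (hKy : 0 < Ky) (hP : 0 < P) (hσ2 : 0 < σ2)
    (H : ℝ → ℝ → ℂ)
    (hH : ∀ β1 β2, H β1 β2 =
      C * (_root_.sinc (Kx * π * (α1 - β1)) : ℝ) * (_root_.sinc (Ky * π * (α2 - β2)) : ℝ))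
    (μf : ℝ → ℝ → ℝ)
    (hμf : ∀ β1 β2, μf β1 β2 = P * ‖H β1 β2‖ ^ 2 + σ2)
    (β1₀ β2₀ v : ℝ)
    (hv : ∃ m : ℕ, 0 < m ∧ Kx * v = m)
    (h1 : α1 - β1₀ ≠ 0) (h2 : α1 - β1₀ - v ≠ 0)
    (h3 : Real.sin (Kx * π * (α1 - β1₀)) ≠ 0)
    (h4 : _root_.sinc (Ky * π * (α2 - β2₀)) ≠ 0) :
    (μf β1₀ β2₀ - σ2) / (μf (β1₀ + v) β2₀ - σ2)
      = ((α1 - β1₀ - v) / (α1 - β1₀)) ^ 2 := by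
  obtain ⟨m, hm, hmv⟩ := hv
  have hπ := Real.pi_ne_zero
  have hx1 : Kx * π * (α1 - β1₀) ≠ 0 := by
    exact mul_ne_zero (mul_ne_zero hKx.ne' hπ) h1
  have hx2 : Kx * π * (α1 - β1₀ - v) ≠ 0 := by
    exact mul_ne_zero (mul_ne_zero hKx.ne' hπ) h2
  have harg : Kx * π * (α1 - (β1₀ + v)) = Kx * π * (α1 - β1₀) - m * π := by
    rw [← hmv]; ring
  have hsinsq : Real.sin (Kx * π * (α1 - (β1₀ + v))) ^ 2
      = Real.sin (Kx * π * (α1 - β1₀)) ^ 2 := by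
    rw [harg, Real.sin_sub_nat_mul_pi, mul_pow, ← pow_mul, mul_comm m 2, pow_mul]
    norm_num
  have habs : ∀ β1 β2, μf β1 β2 - σ2
      = P * ‖C‖ ^ 2 * _root_.sinc (Kx * π * (α1 - β1)) ^ 2
        * _root_.sinc (Ky * π * (α2 - β2)) ^ 2 := by
    intro β1 β2
    rw [hμf, hH, norm_mul, norm_mul, Complex.norm_real, Complex.norm_real, Real.norm_eq_abs, Real.norm_eq_abs]
    rw [← sq_abs (_root_.sinc (Kx * π * (α1 - β1))), ← sq_abs (_root_.sinc (Ky * π * (α2 - β2)))]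
    ring
  rw [habs, habs]
  have heq : Kx * π * (α1 - (β1₀ + v)) = Kx * π * (α1 - β1₀ - v) := by ring
  have hx2' : Kx * π * (α1 - (β1₀ + v)) ≠ 0 := by rw [heq]; exact hx2
  have hsv : _root_.sinc (Kx * π * (α1 - (β1₀ + v))) = Real.sin (Kx * π * (α1 - (β1₀ + v))) / (Kx * π * (α1 - (β1₀ + v))) := by
    rw [_root_.sinc, if_neg hx2']
  have hs0 : _root_.sinc (Kx * π * (α1 - β1₀)) = Real.sin (Kx * π * (α1 - β1₀)) / (Kx * π * (α1 - β1₀)) := by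
    rw [_root_.sinc, if_neg hx1]
  rw [hsv, hs0, div_pow, div_pow, hsinsq, heq]
  have hC' : ‖C‖ ≠ 0 := norm_ne_zero_iff.mpr hC
  field_simp
  ring_nf
  exact mul_inv_cancel₀ (by convert h4 using 2; ring)
end

section
/- Let v and c be real numbers with v ≠ 0, c ≠ 0, c ≠ v/2, and c ≠ −v/2. Set ρ = |(c − v)/c| and ρ' = |(c + v)/c|. Then the intersection of the two-element sets {v/(1 + ρ), v/(1 − ρ)} and {−v/(1 + ρ'), −v/(1 − ρ')} equals exactly {c}. In other words, c is the unique real number lying simultaneously among the two solutions of |(x − v)/x| = ρ and the two solutions of |(x + v)/x| = ρ'. -/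
/-- uniqueness claim behind Eq. (18) of the paper's Theorem 1.
For `v ≠ 0`, `c ∉ {0, v/2, −v/2}`, with `ρ = |(c − v)/c|` and `ρ' = |(c + v)/c|`,
the intersection of `{v/(1 + ρ), v/(1 − ρ)}` and `{−v/(1 + ρ'), −v/(1 − ρ')}` is
exactly `{c}`. -/
theorem unique_common_solution (c v : ℝ) (hv : v ≠ 0) (hc : c ≠ 0)
    (hc1 : c ≠ v / 2) (hc2 : c ≠ -v / 2) (ρ ρ' : ℝ)
    (hρ : ρ = |(c - v) / c|) (hρ' : ρ' = |(c + v) / c|) :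
    ({v / (1 + ρ), v / (1 - ρ)} : Set ℝ) ∩ ({-v / (1 + ρ'), -v / (1 - ρ')} : Set ℝ)
      = {c} := by
  have key : ∀ x d : ℝ, x = v / d ↔ v / x = d := by
    intro x d
    constructor
    · rintro rfl
      rcases eq_or_ne d 0 with h | h
      · simp [h]
      · field_simp
    · rintro rfl
      rcases eq_or_ne x 0 with h | h
      · simp [h]
      · field_simp
  have hρt : ρ = |1 - v / c| := by
    rw [hρ]; congr 1; field_simp
  have hρt' : ρ' = |1 + v / c| := by
    rw [hρ']; congr 1; field_simp
  ext x
  simp only [Set.mem_inter_iff, Set.mem_insert_iff, Set.mem_singleton_iff]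
  have e1 : x = v / (1 + ρ) ↔ v / x = 1 + ρ := key x _
  have e2 : x = v / (1 - ρ) ↔ v / x = 1 - ρ := key x _
  have e3 : x = -v / (1 + ρ') ↔ v / x = -(1 + ρ') := by
    rw [neg_div, ← div_neg]; exact key x _
  have e4 : x = -v / (1 - ρ') ↔ v / x = -(1 - ρ') := by
    rw [neg_div, ← div_neg]; exact key x _
  have e5 : x = c ↔ v / x = v / c := by
    have := key x (v / c)
    rwa [show v / (v / c) = c by field_simp] at this
  rw [e1, e2, e3, e4, e5]
  set y := v / x with hy
  set t := v / c with htdef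
  rw [hρt, hρt']
  constructor
  · rintro ⟨h1 | h1, h2 | h2⟩ <;>
      rcases abs_cases (1 - t) with ⟨ha, ha'⟩ | ⟨ha, ha'⟩ <;>
      rcases abs_cases (1 + t) with ⟨hb, hb'⟩ | ⟨hb, hb'⟩ <;>
      linarith
  · intro h
    constructor
    · rcases abs_cases (1 - t) with ⟨ha, ha'⟩ | ⟨ha, ha'⟩
      · right; linarith
      · left; linarith
    · rcases abs_cases (1 + t) with ⟨hb, hb'⟩ | ⟨hb, hb'⟩
      · right; linarith
      · left; linarith
end

section
/- Define sinc(x) = sin(x)/x for x ≠ 0 and sinc(0) = 1, let H(β1, β2) = C·sinc(K_x·π·(α1 − β1))·sinc(K_y·π·(α2 − β2)) with C a nonzero complex constant, K_x, K_y > 0, α1, α2 real, and let μ(β1, β2) = P·|H(β1, β2)|² + σ² with P > 0 and σ² > 0. Let β1⁰, β2⁰, v be reals such that K_x·v is a positive integer, α1 − β1⁰ ≠ 0, α1 − β1⁰ − v ≠ 0, sin(K_x·π·(α1 − β1⁰)) ≠ 0, and sinc(K_y·π·(α2 − β2⁰)) ≠ 0. Set r = √( (μ(β1⁰, β2⁰)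 − σ²) / (μ(β1⁰ + v, β2⁰) − σ²) ). Then (1 + r)·(α1 − β1⁰) = v or (1 − r)·(α1 − β1⁰) = v; i.e., α1 ∈ {β1⁰ + v/(1 + r), β1⁰ + v/(1 − r)}. -/
open Real

/-- Eq. (16) of the paper's Theorem 1. With
`H(β1,β2) = C·sinc(Kₓπ(α1−β1))·sinc(K_yπ(α2−β2))` (`C ≠ 0`, `Kₓ, K_y > 0`) and
`μ(β1,β2) = P|H(β1,β2)|² + σ²` (`P, σ² > 0`), if `Kₓ·v` is a positive integer,
`α1 − β1⁰ ≠ 0`, `α1 − β1⁰ − v ≠ 0`, `sin(Kₓπ(α1 − β1⁰)) ≠ 0` and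
`sinc(K_yπ(α2 − β2⁰)) ≠ 0`, then with
`r = √((μ(β1⁰,β2⁰) − σ²)/(μ(β1⁰+v,β2⁰) − σ²))` we have
`(1 + r)(α1 − β1⁰) = v` or `(1 − r)(α1 − β1⁰) = v`, i.e.
`α1 ∈ {β1⁰ + v/(1 + r), β1⁰ + v/(1 − r)}`. -/
theorem alpha1_two_candidates (C : ℂ) (hC : C ≠ 0) (Kx Ky α1 α2 P σ2 : ℝ)
    (hKx : 0 < Kx) (hKy : 0 < Ky) (hP : 0 < P) (hσ2 : 0 < σ2)
    (H : ℝ → ℝ → ℂ)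
    (hH : ∀ β1 β2, H β1 β2 =
      C * (_root_.sinc (Kx * π * (α1 - β1)) : ℝ) * (_root_.sinc (Ky * π * (α2 - β2)) : ℝ))
    (μf : ℝ → ℝ → ℝ)
    (hμf : ∀ β1 β2, μf β1 β2 = P * ‖H β1 β2‖ ^ 2 + σ2)
    (β1₀ β2₀ v : ℝ)
    (hv : ∃ m : ℕ, 0 < m ∧ Kx * v = m)
    (h1 : α1 - β1₀ ≠ 0) (h2 : α1 - β1₀ - v ≠ 0)
    (h3 : Real.sin (Kx * π * (α1 - β1₀)) ≠ 0)
    (h4 : _root_.sinc (Ky * π * (α2 - β2₀)) ≠ 0)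
    (r : ℝ) (hr : r = Real.sqrt ((μf β1₀ β2₀ - σ2) / (μf (β1₀ + v) β2₀ - σ2))) :
    (1 + r) * (α1 - β1₀) = v ∨ (1 - r) * (α1 - β1₀) = v := by
  obtain ⟨m, hm, hmv⟩ := hv
  have hKπ : Kx * π ≠ 0 := mul_ne_zero (ne_of_gt hKx) Real.pi_ne_zero
  set d := α1 - β1₀ with hd
  set x := Kx * π * d with hxdef
  set x' := Kx * π * (d - v) with hx'def
  have hx0 : x ≠ 0 := mul_ne_zero hKπ h1
  have hx'0 : x' ≠ 0 := mul_ne_zero hKπ h2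
  have hx'eq : x' = x - (m : ℝ) * π := by
    have : x' = x - (Kx * v) * π := by rw [hx'def, hxdef]; ring
    rw [this, hmv]
  -- sin x' squared equals sin x squared
  have hc : Real.cos ((m : ℝ) * π) ^ 2 = 1 := by
    have h5 := Real.sin_sq_add_cos_sq ((m : ℝ) * π)
    rw [Real.sin_nat_mul_pi] at h5; nlinarith
  have hsin2 : Real.sin x' ^ 2 = Real.sin x ^ 2 := by
    rw [hx'eq, Real.sin_sub, Real.sin_nat_mul_pi]
    nlinarith
  have hsabs : |Real.sin x'| = |Real.sin x| := by
    have := congrArg Real.sqrt hsin2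
    rwa [Real.sqrt_sq_eq_abs, Real.sqrt_sq_eq_abs] at this
  have hsin'0 : Real.sin x' ≠ 0 := by
    intro h; rw [h] at hsin2
    apply h3
    have h6 : Real.sin x ^ 2 = 0 := by rw [← hsin2]; ring
    exact pow_eq_zero_iff (n := 2) (by norm_num) |>.mp h6
  set sy := _root_.sinc (Ky * π * (α2 - β2₀)) with hsy
  have hsx : _root_.sinc x = Real.sin x / x := by rw [_root_.sinc, if_neg hx0]
  have hsx' : _root_.sinc x' = Real.sin x' / x' := by rw [_root_.sinc, if_neg hx'0]
  have hsx0 : _root_.sinc x ≠ 0 := by rw [hsx]; exact div_ne_zero h3 hx0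
  have hsx'0 : _root_.sinc x' ≠ 0 := by rw [hsx']; exact div_ne_zero hsin'0 hx'0
  have hA : ‖C‖ ≠ 0 := by simpa using hC
  have habs : ∀ s t : ℝ, ‖C * (s:ℂ) * (t:ℂ)‖ = ‖C‖ * |s| * |t| := by
    intro s t; simp
  have hμ0 : μf β1₀ β2₀ - σ2 = P * (‖C‖ * |_root_.sinc x| * |sy|) ^ 2 := by
    have e1 : Kx * π * (α1 - β1₀) = x := by rw [hxdef, hd]
    rw [hμf, hH, e1, habs]; ring
  have hμ1 : μf (β1₀ + v) β2₀ - σ2 = P * (‖C‖ * |_root_.sinc x'| * |sy|) ^ 2 := by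
    have e2 : Kx * π * (α1 - (β1₀ + v)) = x' := by rw [hx'def, hd]; ring
    rw [hμf, hH, e2, habs]; ring
  have hsy0 : |sy| ≠ 0 := abs_ne_zero.mpr h4
  have hsxa : |_root_.sinc x| ≠ 0 := abs_ne_zero.mpr hsx0
  have hsx'a : |_root_.sinc x'| ≠ 0 := abs_ne_zero.mpr hsx'0
  have hkey : (μf β1₀ β2₀ - σ2) / (μf (β1₀ + v) β2₀ - σ2)
      = (|_root_.sinc x| / |_root_.sinc x'|) ^ 2 := by
    rw [hμ0, hμ1]
    field_simp
  have hrval : r = |_root_.sinc x| / |_root_.sinc x'| := by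
    rw [hr, hkey, Real.sqrt_sq (by positivity)]
  have hxabs : |x| = |Kx * π| * |d| := by rw [hxdef, abs_mul]
  have hx'abs : |x'| = |Kx * π| * |d - v| := by rw [hx'def, abs_mul]
  have hrd : r * |d| = |d - v| := by
    have hKa : |Kx * π| ≠ 0 := abs_ne_zero.mpr hKπ
    have hda : |d| ≠ 0 := abs_ne_zero.mpr h1
    have hsa : |Real.sin x| ≠ 0 := abs_ne_zero.mpr h3
    rw [hrval, hsx, hsx', abs_div, abs_div, hsabs, hxabs, hx'abs]
    field_simp
  rcases abs_cases d with ⟨hda, _⟩ | ⟨hda, _⟩ <;>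
    rcases abs_cases (d - v) with ⟨hva, _⟩ | ⟨hva, _⟩ <;>
      rw [hda, hva] at hrd
  · right; linarith
  · left; linarith
  · left; linarith
  · right; linarith
end

section
/- Define sinc(x) = sin(x)/x for x ≠ 0 and sinc(0) = 1, let H(β1, β2) = C·sinc(K_x·π·(α1 − β1))·sinc(K_y·π·(α2 − β2)) with C a nonzero complex constant, K_x, K_y > 0, α1, α2 real, and let μ(β1, β2) = P·|H(β1, β2)|² + σ² with P > 0 and σ² > 0. Let β1⁰, β2⁰, v be reals such that K_x·v is a positive integer, v ≠ 0, c := α1 − β1⁰ satisfies c ∉ {0, v, −v, v/2, −v/2}, sin(K_x·π·c) ≠ 0, and sinc(K_y·π·(α2 − β2⁰)) ≠ 0. Set r₊ = √((μ(β1⁰, β2⁰) − σ²)/(μ(β1⁰ + v, β2⁰) − σ²)) and r₋ = √((μ(β1⁰, β2⁰) − σ²)/(μ(β1⁰ − v, β2⁰) − σ²)). Then the intersection of the sets {β1⁰ + v/(1 + r₊), β1⁰ + v/(1 − r₊)} and {β1⁰ − v/(1 + r₋), β1⁰ − v/(1 − r₋)} equals exactly {α1}; in particular, α1 is uniquely recovered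 from the three noiseless mean values μ(β1⁰, β2⁰), μ(β1⁰ + v, β2⁰), μ(β1⁰ − v, β2⁰). -/
open Real

lemma pair_set (c v : ℝ) (hc : c ≠ 0) (hv : v ≠ 0) (hcv : c ≠ v) (hc2 : 2*c - v ≠ 0) :
    ({v / (1 + |c - v| / |c|), v / (1 - |c - v| / |c|)} : Set ℝ)
      = {c, v * c / (2 * c - v)} := by
  have hcv' : c - v ≠ 0 := sub_ne_zero.mpr hcv
  have f1 : v / ((2*c - v)/c) = v * c / (2*c - v) := div_div_eq_mul_div v (2*c-v) c
  have f2 : v / (v/c) = c := by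
    rw [div_div_eq_mul_div, mul_comm, mul_div_assoc, div_self hv, mul_one]
  rcases abs_cases c with ⟨h1, _⟩ | ⟨h1, _⟩ <;>
    rcases abs_cases (c - v) with ⟨h2, _⟩ | ⟨h2, _⟩ <;> rw [h1, h2]
  · have e1 : 1 + (c - v) / c = (2*c - v) / c := by field_simp; ring
    have e2 : 1 - (c - v) / c = v / c := by field_simp; ring
    rw [e1, e2, f1, f2, Set.pair_comm]
  · have e1 : 1 + -(c - v) / c = v / c := by field_simp; ring
    have e2 : 1 - -(c - v) / c = (2*c - v) / c := by field_simp; ring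
    rw [e1, e2, f1, f2]
  · have e1 : 1 + (c - v) / -c = v / c := by rw [div_neg]; field_simp; ring
    have e2 : 1 - (c - v) / -c = (2*c - v) / c := by rw [div_neg]; field_simp; ring
    rw [e1, e2, f1, f2]
  · have e1 : 1 + -(c - v) / -c = (2*c - v) / c := by rw [div_neg]; field_simp; ring
    have e2 : 1 - -(c - v) / -c = v / c := by rw [div_neg]; field_simp; ring
    rw [e1, e2, f1, f2, Set.pair_comm]

lemma r_val (Kx P A sy c d : ℝ) (hKx : 0 < Kx) (hP : 0 < P) (hA : 0 < A) (hsy : sy ≠ 0)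
    (hc : c ≠ 0) (hd : d ≠ 0)
    (hsin : |Real.sin (Kx * π * d)| = |Real.sin (Kx * π * c)|)
    (hS : Real.sin (Kx * π * c) ≠ 0) :
    Real.sqrt ((P * A * _root_.sinc (Kx * π * c) ^ 2 * sy ^ 2)
      / (P * A * _root_.sinc (Kx * π * d) ^ 2 * sy ^ 2)) = |d| / |c| := by
  have hπ := Real.pi_pos
  have hKπ : 0 < Kx * π := mul_pos hKx hπ
  have hxc : Kx * π * c ≠ 0 := mul_ne_zero (ne_of_gt hKπ) hc
  have hxd : Kx * π * d ≠ 0 := mul_ne_zero (ne_of_gt hKπ) hd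
  have hSd : Real.sin (Kx * π * d) ≠ 0 := by
    intro h
    rw [h, abs_zero] at hsin
    exact hS (abs_eq_zero.mp hsin.symm)
  have ha : _root_.sinc (Kx * π * c) = Real.sin (Kx * π * c) / (Kx * π * c) := if_neg hxc
  have hb : _root_.sinc (Kx * π * d) = Real.sin (Kx * π * d) / (Kx * π * d) := if_neg hxd
  have hbne : _root_.sinc (Kx * π * d) ≠ 0 := by
    rw [hb]; exact div_ne_zero hSd hxd
  have hq : (P * A * _root_.sinc (Kx * π * c) ^ 2 * sy ^ 2)
      / (P * A * _root_.sinc (Kx * π * d) ^ 2 * sy ^ 2)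
      = (_root_.sinc (Kx * π * c) / _root_.sinc (Kx * π * d)) ^ 2 := by
    field_simp
  rw [hq, Real.sqrt_sq_eq_abs, abs_div, ha, hb, abs_div, abs_div, hsin,
    abs_mul, abs_mul, abs_of_pos hKx, abs_of_pos hπ]
  have hSpos : 0 < |Real.sin (Kx * π * c)| := abs_pos.mpr hS
  have hcpos : 0 < |c| := abs_pos.mpr hc
  have hdpos : 0 < |d| := abs_pos.mpr hd
  rw [abs_mul (Kx*π) d, abs_mul Kx π, abs_of_pos hKx, abs_of_pos hπ]
  field_simp


/-- the paper's Theorem 1 for `α1`, with uniqueness. With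
`H(β1,β2) = C·sinc(Kₓπ(α1−β1))·sinc(K_yπ(α2−β2))` (`C ≠ 0`, `Kₓ, K_y > 0`) and
`μ(β1,β2) = P|H(β1,β2)|² + σ²` (`P, σ² > 0`), if `Kₓ·v` is a positive integer,
`v ≠ 0`, `c := α1 − β1⁰ ∉ {0, v, −v, v/2, −v/2}`, `sin(Kₓπc) ≠ 0` and
`sinc(K_yπ(α2 − β2⁰)) ≠ 0`, then with
`r₊ = √((μ(β1⁰,β2⁰) − σ²)/(μ(β1⁰+v,β2⁰) − σ²))` and
`r₋ = √((μ(β1⁰,β2⁰) − σ²)/(μ(β1⁰−v,β2⁰) − σ²))`, the intersection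
`{β1⁰ + v/(1+r₊), β1⁰ + v/(1−r₊)} ∩ {β1⁰ − v/(1+r₋), β1⁰ − v/(1−r₋)}` equals `{α1}`. -/
theorem alpha1_uniquely_recovered (C : ℂ) (hC : C ≠ 0) (Kx Ky α1 α2 P σ2 : ℝ)
    (hKx : 0 < Kx) (hKy : 0 < Ky) (hP : 0 < P) (hσ2 : 0 < σ2)
    (H : ℝ → ℝ → ℂ)
    (hH : ∀ β1 β2, H β1 β2 =
      C * (_root_.sinc (Kx * π * (α1 - β1)) : ℝ) * (_root_.sinc (Ky * π * (α2 - β2)) : ℝ))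
    (μf : ℝ → ℝ → ℝ)
    (hμf : ∀ β1 β2, μf β1 β2 = P * ‖H β1 β2‖ ^ 2 + σ2)
    (β1₀ β2₀ v : ℝ) (hvne : v ≠ 0)
    (hv : ∃ m : ℕ, 0 < m ∧ Kx * v = m)
    (hc0 : α1 - β1₀ ≠ 0) (hcv : α1 - β1₀ ≠ v) (hcv' : α1 - β1₀ ≠ -v)
    (hcv2 : α1 - β1₀ ≠ v / 2) (hcv2' : α1 - β1₀ ≠ -v / 2)
    (h3 : Real.sin (Kx * π * (α1 - β1₀)) ≠ 0)
    (h4 : _root_.sinc (Ky * π * (α2 - β2₀)) ≠ 0)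
    (rp rm : ℝ)
    (hrp : rp = Real.sqrt ((μf β1₀ β2₀ - σ2) / (μf (β1₀ + v) β2₀ - σ2)))
    (hrm : rm = Real.sqrt ((μf β1₀ β2₀ - σ2) / (μf (β1₀ - v) β2₀ - σ2))) :
    ({β1₀ + v / (1 + rp), β1₀ + v / (1 - rp)} : Set ℝ)
        ∩ ({β1₀ - v / (1 + rm), β1₀ - v / (1 - rm)} : Set ℝ)
      = {α1} := by
  obtain ⟨m, hm, hKv⟩ := hv
  have hπ := Real.pi_pos
  set c := α1 - β1₀ with hc
  set sy := _root_.sinc (Ky * π * (α2 - β2₀)) with hsy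
  have hA : 0 < ‖C‖ ^ 2 := pow_pos (norm_pos_iff.mpr hC) 2
  -- the three mean values
  have key : ∀ β1, μf β1 β2₀ - σ2
      = P * ‖C‖ ^ 2 * _root_.sinc (Kx * π * (α1 - β1)) ^ 2 * sy ^ 2 := by
    intro β1
    rw [hμf, hH]
    simp only [norm_mul, Complex.norm_real, Real.norm_eq_abs, mul_pow, sq_abs, add_sub_cancel_right]
    ring
  -- derived non-degeneracy
  have hcmv : c - v ≠ 0 := sub_ne_zero.mpr hcv
  have hcpv : c + v ≠ 0 := by
    intro h; exact hcv' (by linarith)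
  have h2cv : 2 * c - v ≠ 0 := by
    intro h; exact hcv2 (by linarith)
  have h2cv' : 2 * c + v ≠ 0 := by
    intro h; exact hcv2' (by linarith)
  -- compute rp and rm
  have hrp' : rp = |c - v| / |c| := by
    rw [hrp, key β1₀, key (β1₀ + v), ← hc,
      show α1 - (β1₀ + v) = c - v by rw [hc]; ring]
    refine r_val Kx P _ sy c (c - v) hKx hP hA h4 hc0 hcmv ?_ h3
    rw [show Kx * π * (c - v) = Kx * π * c - (m : ℝ) * π by rw [← hKv]; ring,
      Real.sin_sub_nat_mul_pi, abs_mul, abs_pow, abs_neg, abs_one, one_pow, one_mul]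
  have hrm' : rm = |c - -v| / |c| := by
    rw [hrm, key β1₀, key (β1₀ - v), ← hc,
      show α1 - (β1₀ - v) = c - -v by rw [hc]; ring]
    refine r_val Kx P _ sy c (c - -v) hKx hP hA h4 hc0 (by rwa [sub_neg_eq_add]) ?_ h3
    rw [show Kx * π * (c - -v) = Kx * π * c + (m : ℝ) * π by rw [← hKv]; ring,
      Real.sin_add_nat_mul_pi, abs_mul, abs_pow, abs_neg, abs_one, one_pow, one_mul]
  -- identify the two candidate sets
  have hset1 : ({β1₀ + v / (1 + rp), β1₀ + v / (1 - rp)} : Set ℝ)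
      = {β1₀ + c, β1₀ + v * c / (2 * c - v)} := by
    calc ({β1₀ + v / (1 + rp), β1₀ + v / (1 - rp)} : Set ℝ)
        = (fun x => β1₀ + x) '' {v / (1 + rp), v / (1 - rp)} := (Set.image_pair _ _ _).symm
      _ = (fun x => β1₀ + x) '' {c, v * c / (2 * c - v)} := by
            rw [hrp', pair_set c v hc0 hvne hcv h2cv]
      _ = {β1₀ + c, β1₀ + v * c / (2 * c - v)} := Set.image_pair _ _ _
  have hset2 : ({β1₀ - v / (1 + rm), β1₀ - v / (1 - rm)} : Set ℝ)
      = {β1₀ + c, β1₀ + -v * c / (2 * c + v)} := by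
    calc ({β1₀ - v / (1 + rm), β1₀ - v / (1 - rm)} : Set ℝ)
        = (fun x => β1₀ + x) '' {-v / (1 + rm), -v / (1 - rm)} := by
            rw [Set.image_pair]; simp only [neg_div, ← sub_eq_add_neg]
      _ = (fun x => β1₀ + x) '' {c, -v * c / (2 * c - -v)} := by
            rw [hrm', pair_set c (-v) hc0 (neg_ne_zero.mpr hvne)
              (fun h => hcv' h) (by rw [sub_neg_eq_add]; exact h2cv')]
      _ = {β1₀ + c, β1₀ + -v * c / (2 * c + v)} := by
            rw [Set.image_pair, sub_neg_eq_add]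
  rw [hset1, hset2]
  -- the side candidates differ pairwise
  have hp : v * c / (2 * c - v) ≠ c := by
    intro h
    have h' : v * c = c * (2 * c - v) := (div_eq_iff h2cv).mp h
    have h0 : 2 * c * (c - v) = 0 := by linear_combination -h'
    exact mul_ne_zero (mul_ne_zero two_ne_zero hc0) hcmv h0
  have hq : -v * c / (2 * c + v) ≠ c := by
    intro h
    have h' : -v * c = c * (2 * c + v) := (div_eq_iff h2cv').mp h
    have h0 : 2 * c * (c + v) = 0 := by linear_combination -h'
    exact mul_ne_zero (mul_ne_zero two_ne_zero hc0) hcpv h0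
  have hpq : v * c / (2 * c - v) ≠ -v * c / (2 * c + v) := by
    intro h
    have h' : v * c * (2 * c + v) = -v * c * (2 * c - v) :=
      (div_eq_div_iff h2cv h2cv').mp h
    have h0 : 4 * (v * (c * c)) = 0 := by linear_combination h'
    have : v * (c * c) ≠ 0 := mul_ne_zero hvne (mul_ne_zero hc0 hc0)
    have h4' : (4 : ℝ) ≠ 0 := by norm_num
    exact mul_ne_zero h4' this h0
  have hα : β1₀ + c = α1 := by rw [hc]; ring
  ext x
  simp only [Set.mem_inter_iff, Set.mem_insert_iff, Set.mem_singleton_iff]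
  constructor
  · rintro ⟨h1 | h1, h2 | h2⟩
    · rw [h1]; exact hα
    · rw [h1]; exact hα
    · rw [h2]; exact hα
    · exfalso; rw [h1] at h2
      exact hpq (by linarith)
  · intro h
    exact ⟨Or.inl (by rw [h, hα]), Or.inl (by rw [h, hα])⟩
end
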